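/- Let M ≥ 1, let S_1,…,S_M and A_1,…,A_M be finite nonempty sets, S := S_1×⋯×S_M, A := A_1×⋯×A_M, and for T ⊆ {1,…,M} write s[T] := (s_j)_{j∈T}, a[T] := (a_j)_{j∈T}, S[T] := Π_{j∈T}S_j, A[T] := Π_{j∈T}A_j. Let d, n ≥ 1, λ > 0, B > 0. For each j let Z_j ⊆ {1,…,M}, φ_j : S[Z_j]×A_j → ℝ^d with ‖φ_j(·)‖₂ ≤ 1, and w_j : S_j → ℝ^d such that P_j(s′_j|s[Z_j],a_j) := ⟨φ_j(s[Z_j],a_j), w_j(s′_j)⟩ is a probability distribution over s′_j for every (s[Z_j],a_j); define P(s′|s,a) := Π_{j=1}^M P_j(s′_j|s[Z_j],a_j). Fix i, set W_i := ∪_{j∈Z_i} Z_j, and assume that for every G : S[W_i] → [0,1] one has ‖ Σ_{z∈S[W_i]} (⊗_{k∈W_i} w_k(z_k))·G(z) ‖₂ ≤ √(d^{|W_i|}) (Kronecker products taken in a fixed order). Define φ̃_i(s,a) := ⊗_{k∈W_i} φ_k(s[Z_k], a_k) ∈ ℝ^{d^{|W_i|}}. Let μ be a distribution on S×A, set Σ̃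 := n·Σ_{(s,a)} μ(s,a)·φ̃_i(s,a)φ̃_i(s,a)ᵀ + λ·I_{d^{|W_i|}}, and define ν on S×A by ν(s,a) := (1/|A|)·Σ_{(s̃,ã)} μ(s̃,ã)·P(s|s̃,ã). Let q′ be any distribution on S×A, π : S → Δ(A) a policy, and q(s,a) := Σ_{(s̃,ã)} q′(s̃,ã)·P(s|s̃,ã)·π(a|s). Then for every g : S[W_i]×A[Z_i] → [0,B]: E_{(s,a)∼q}[ g(s[W_i], a[Z_i]) ] ≤ |A[Z_i]| · E_{(s̃,ã)∼q′}[ ‖φ̃_i(s̃,ã)‖_{Σ̃^{-1}} ] · √( n·E_{(s,a)∼ν}[ g(s[W_i],a[Z_i])² ] + B²·λ·d^{|W_i|} ). -/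

import Mathlib

open Finset Matrix

/-- Euclidean (ℓ²) norm of a finite-dimensional real vector. -/
noncomputable def l2norm {ι : Type*} [Fintype ι] (x : ι → ℝ) : ℝ :=
  Real.sqrt (∑ i, x i ^ 2)

/-- Matrix-weighted norm ‖x‖_M = √(xᵀ M x). -/
noncomputable def matNorm {ι : Type*} [Fintype ι] (M : Matrix ι ι ℝ) (x : ι → ℝ) : ℝ :=
  Real.sqrt (x ⬝ᵥ M.mulVec x)

lemma jensen_sq {ι : Type*} [Fintype ι] (P g : ι → ℝ) (hP : ∀ i, 0 ≤ P i)
    (hPs : ∑ i, P i = 1) : (∑ i, P i * g i) ^ 2 ≤ ∑ i, P i * g i ^ 2 := by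
  have h := Finset.sum_mul_sq_le_sq_mul_sq Finset.univ
    (fun i => Real.sqrt (P i)) (fun i => Real.sqrt (P i) * g i)
  have e1 : ∀ i : ι, Real.sqrt (P i) * (Real.sqrt (P i) * g i) = P i * g i := by
    intro i; rw [← mul_assoc, Real.mul_self_sqrt (hP i)]
  have e2 : ∀ i : ι, Real.sqrt (P i) ^ 2 = P i := fun i => Real.sq_sqrt (hP i)
  have e3 : ∀ i : ι, (Real.sqrt (P i) * g i) ^ 2 = P i * g i ^ 2 := by
    intro i; rw [mul_pow, e2]
  simp only [e1, e2, e3, hPs, one_mul] at h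
  exact h

lemma psd_quad_nonneg {ι : Type*} [Fintype ι] {Sg : Matrix ι ι ℝ} (h : Sg.PosSemidef)
    (x : ι → ℝ) : 0 ≤ x ⬝ᵥ Sg.mulVec x := by
  have := h.dotProduct_mulVec_nonneg x
  simpa using this

lemma mat_cauchy_schwarz {ι : Type*} [Fintype ι] [DecidableEq ι]
    {Sg : Matrix ι ι ℝ} (h : Sg.PosDef) (x y : ι → ℝ) :
    x ⬝ᵥ y ≤ matNorm Sg⁻¹ x * matNorm Sg y := by
  have hinv : (Sg⁻¹).PosDef := h.inv
  have hdet : IsUnit Sg.det := h.det_pos.ne'.isUnit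
  have hsymm : Sg⁻¹ᵀ = Sg⁻¹ := by
    have := hinv.isHermitian
    simpa [Matrix.IsHermitian, Matrix.conjTranspose_eq_transpose_of_trivial] using this
  set a := x ⬝ᵥ Sg⁻¹.mulVec x with ha
  set c := y ⬝ᵥ Sg.mulVec y with hc
  set b := x ⬝ᵥ y with hb
  have hann : 0 ≤ a := psd_quad_nonneg hinv.posSemidef x
  have hcnn : 0 ≤ c := psd_quad_nonneg h.posSemidef y
  -- quadratic in t: 0 ≤ c t² - 2 b t + a
  have key : ∀ t : ℝ, 0 ≤ c * (t * t) + (-2 * b) * t + a := by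
    intro t
    have h0 : 0 ≤ (x - t • (Sg.mulVec y)) ⬝ᵥ Sg⁻¹.mulVec (x - t • (Sg.mulVec y)) :=
      psd_quad_nonneg hinv.posSemidef _
    have e1 : Sg⁻¹.mulVec (Sg.mulVec y) = y := by
      rw [Matrix.mulVec_mulVec, Matrix.nonsing_inv_mul _ hdet, Matrix.one_mulVec]
    have e2 : (Sg.mulVec y) ⬝ᵥ Sg⁻¹.mulVec x = x ⬝ᵥ y := by
      rw [Matrix.dotProduct_mulVec, ← Matrix.mulVec_transpose, hsymm, e1]
      exact dotProduct_comm _ _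
    have e3 : (Sg.mulVec y) ⬝ᵥ Sg⁻¹.mulVec (Sg.mulVec y) = c := by
      rw [e1, hc]
      exact dotProduct_comm _ _
    have expand : (x - t • (Sg.mulVec y)) ⬝ᵥ Sg⁻¹.mulVec (x - t • (Sg.mulVec y))
        = a - t * (x ⬝ᵥ y) - t * (x ⬝ᵥ y) + t * t * c := by
      rw [sub_eq_add_neg, Matrix.mulVec_add, add_dotProduct, dotProduct_add,
        dotProduct_add]
      have hneg : -(t • Sg.mulVec y) = (-t) • (Sg.mulVec y) := by rw [neg_smul]
      rw [hneg, Matrix.mulVec_smul, smul_dotProduct, smul_dotProduct,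
        dotProduct_smul, dotProduct_smul]
      have e4 : x ⬝ᵥ Sg⁻¹.mulVec (Sg.mulVec y) = x ⬝ᵥ y := by rw [e1]
      rw [e2, e3, e4]
      simp only [smul_eq_mul]
      ring
    rw [expand] at h0
    rw [hb]
    nlinarith [h0]
  have hdisc := discrim_le_zero key
  have hb2 : b * b ≤ a * c := by
    simp only [discrim] at hdisc
    nlinarith [hdisc]
  have : b ≤ Real.sqrt a * Real.sqrt c := by
    calc b ≤ |b| := le_abs_self b
    _ = Real.sqrt (b * b) := by rw [Real.sqrt_mul_self_eq_abs]
    _ ≤ Real.sqrt (a * c) := Real.sqrt_le_sqrt hb2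
    _ = Real.sqrt a * Real.sqrt c := Real.sqrt_mul hann c
  simpa [matNorm, ha, hc, hb] using this

lemma sum_mulVec' {ι β : Type*} [Fintype ι] (s : Finset β)
    (f : β → Matrix ι ι ℝ) (u : ι → ℝ) :
    (∑ x ∈ s, f x) *ᵥ u = ∑ x ∈ s, (f x) *ᵥ u := by
  funext i
  simp only [Matrix.mulVec, dotProduct, Matrix.sum_apply, Finset.sum_apply,
    Finset.sum_mul]
  rw [Finset.sum_comm]

lemma dotProduct_sum' {ι β : Type*} [Fintype ι] (s : Finset β)
    (v : ι → ℝ) (f : β → ι → ℝ) :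
    v ⬝ᵥ (∑ x ∈ s, f x) = ∑ x ∈ s, v ⬝ᵥ f x := by
  simp only [dotProduct, Finset.sum_apply, Finset.mul_sum]
  rw [Finset.sum_comm]

lemma dot_sum_mulVec {ι β : Type*} [Fintype ι] (s : Finset β)
    (v : ι → ℝ) (f : β → Matrix ι ι ℝ) (u : ι → ℝ) :
    v ⬝ᵥ (∑ x ∈ s, f x) *ᵥ u = ∑ x ∈ s, v ⬝ᵥ (f x) *ᵥ u := by
  rw [sum_mulVec', dotProduct_sum']

lemma dot_vecMulVec {ι : Type*} [Fintype ι] (x u u' y : ι → ℝ) :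
    x ⬝ᵥ (vecMulVec u u') *ᵥ y = (x ⬝ᵥ u) * (u' ⬝ᵥ y) := by
  simp only [Matrix.mulVec, dotProduct, vecMulVec_apply]
  rw [Finset.sum_mul_sum]
  refine Finset.sum_congr rfl fun i _ => ?_
  rw [Finset.mul_sum]
  refine Finset.sum_congr rfl fun j _ => ?_
  ring

lemma sum_inst_congr {α β : Type*} [AddCommMonoid β] {F1 F2 : Fintype α} (f g : α → β)
    (h : ∀ x, f x = g x) :
    @Finset.sum α β _ (@Finset.univ α F1) f = @Finset.sum α β _ (@Finset.univ α F2) g := by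
  cases Subsingleton.elim F1 F2
  exact Finset.sum_congr rfl fun x _ => h x

lemma prod_inst_congr {α β : Type*} [CommMonoid β] {F1 F2 : Fintype α} (f g : α → β)
    (h : ∀ x, f x = g x) :
    @Finset.prod α β _ (@Finset.univ α F1) f = @Finset.prod α β _ (@Finset.univ α F2) g := by
  cases Subsingleton.elim F1 F2
  exact Finset.prod_congr rfl fun x _ => h x

lemma sum_pi_split {ι : Type*} [Fintype ι] [DecidableEq ι] (p : ι → Prop) [DecidablePred p]
    (S : ι → Type*) [∀ i, Fintype (S i)]
    [Fintype {x // p x}] [Fintype {x // ¬ p x}]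
    [DecidableEq {x // p x}] [DecidableEq {x // ¬ p x}]
    (F : (∀ i, S i) → ℝ) :
    ∑ s, F s = ∑ z : ∀ i : {x // p x}, S i.1, ∑ y : ∀ i : {x // ¬ p x}, S i.1,
      F ((Equiv.piEquivPiSubtypeProd p S).symm (z, y)) := by
  rw [← Equiv.sum_comp (Equiv.piEquivPiSubtypeProd p S).symm F, Fintype.sum_prod_type]

lemma prod_subtype_split {α : Type*} [Fintype α] (p : α → Prop) [DecidablePred p]
    [Fintype {x // p x}] [Fintype {x // ¬ p x}] (f : α → ℝ) :
    (∏ i, f i) = (∏ i : {x // p x}, f i.1) * ∏ i : {x // ¬ p x}, f i.1 := by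
  rw [← Fintype.prod_subtype_mul_prod_subtype p f]
  exact congrArg₂ (· * ·) (prod_inst_congr _ _ fun k => rfl)
    (prod_inst_congr _ _ fun k => rfl)

lemma sum_pi_prod {ι : Type*} [Fintype ι] [DecidableEq ι] (S : ι → Type*)
    [∀ i, Fintype (S i)] (F : (i : ι) → S i → ℝ) :
    ∑ f : ∀ i, S i, ∏ i, F i (f i) = ∏ i, ∑ x, F i x := by
  rw [Finset.prod_univ_sum, Fintype.piFinset_univ]

lemma sum_le_sqrt_card_mul {ι : Type*} [Fintype ι] (m : ι → ℝ) (hm : ∀ i, 0 ≤ m i) :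
    ∑ i, m i ≤ Real.sqrt (Fintype.card ι) * Real.sqrt (∑ i, m i ^ 2) := by
  have h := Finset.sum_mul_sq_le_sq_mul_sq Finset.univ (fun _ : ι => (1 : ℝ)) m
  simp only [one_mul, one_pow, Finset.sum_const, Finset.card_univ, nsmul_eq_mul, mul_one] at h
  calc ∑ i, m i = Real.sqrt ((∑ i, m i) ^ 2) := by
        rw [Real.sqrt_sq (Finset.sum_nonneg fun i _ => hm i)]
  _ ≤ Real.sqrt ((Fintype.card ι : ℝ) * ∑ i, m i ^ 2) := Real.sqrt_le_sqrt h
  _ = Real.sqrt (Fintype.card ι) * Real.sqrt (∑ i, m i ^ 2) := Real.sqrt_mul (by positivity) _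

/-- Second one-step back inequality for low-rank factored Markov games, for functions of
the states of the neighborhood-of-neighborhood W_i = ∪_{j∈Z_i} Z_j and actions of Z_i. -/
theorem one_step_back_factored_nbhd
    {M : ℕ} (hM : 1 ≤ M)
    (S : Fin M → Type*) [∀ j, Fintype (S j)] [∀ j, Nonempty (S j)]
    (A : Fin M → Type*) [∀ j, Fintype (A j)] [∀ j, Nonempty (A j)]
    {d n : ℕ} (hd : 1 ≤ d) (hn : 1 ≤ n)
    {lam B : ℝ} (hlam : 0 < lam) (hB : 0 < B)
    (Z : Fin M → Finset (Fin M))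
    (φ : (j : Fin M) → ((k : {k // k ∈ Z j}) → S k.1) → A j → Fin d → ℝ)
    (hφ : ∀ j zs a, l2norm (φ j zs a) ≤ 1)
    (w : (j : Fin M) → S j → Fin d → ℝ)
    (Ploc : (j : Fin M) → ((k : {k // k ∈ Z j}) → S k.1) → A j → S j → ℝ)
    (hPloc : ∀ j zs a s', Ploc j zs a s' = ∑ m, φ j zs a m * w j s' m)
    (hPlocpos : ∀ j zs a s', 0 ≤ Ploc j zs a s')
    (hPlocsum : ∀ j zs a, ∑ s', Ploc j zs a s' = 1)
    (P : (((j : Fin M) → S j) × ((j : Fin M) → A j)) → ((j : Fin M) → S j) → ℝ)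
    (hP : ∀ p s', P p s' = ∏ j, Ploc j (fun k => p.1 k.1) (p.2 j) (s' j))
    (i : Fin M)
    (W : Finset (Fin M)) (hW : W = (Z i).biUnion Z)
    (hw : ∀ G : ((k : {k // k ∈ W}) → S k.1) → ℝ,
      (∀ z, G z ∈ Set.Icc (0 : ℝ) 1) →
      l2norm (fun κ : ({k // k ∈ W} → Fin d) =>
        ∑ z : (k : {k // k ∈ W}) → S k.1,
          (∏ k : {k // k ∈ W}, w k.1 (z k) (κ k)) * G z) ≤
        Real.sqrt ((d : ℝ) ^ W.card))
    (φtil : (((j : Fin M) → S j) × ((j : Fin M) → A j)) → ({k // k ∈ W} → Fin d) → ℝ)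
    (hφtil : ∀ p κ, φtil p κ = ∏ k : {k // k ∈ W},
      φ k.1 (fun k' => p.1 k'.1) (p.2 k.1) (κ k))
    (μ : (((j : Fin M) → S j) × ((j : Fin M) → A j)) → ℝ)
    (hμpos : ∀ p, 0 ≤ μ p) (hμsum : ∑ p, μ p = 1)
    (Sigt : Matrix ({k // k ∈ W} → Fin d) ({k // k ∈ W} → Fin d) ℝ)
    (hSigt : Sigt = (n : ℝ) • (∑ p, μ p • vecMulVec (φtil p) (φtil p)) +
      lam • (1 : Matrix ({k // k ∈ W} → Fin d) ({k // k ∈ W} → Fin d) ℝ))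
    (ν : (((j : Fin M) → S j) × ((j : Fin M) → A j)) → ℝ)
    (hν : ∀ p, ν p = (1 / (Fintype.card ((j : Fin M) → A j) : ℝ)) * ∑ p', μ p' * P p' p.1)
    (q' : (((j : Fin M) → S j) × ((j : Fin M) → A j)) → ℝ)
    (hq'pos : ∀ p, 0 ≤ q' p) (hq'sum : ∑ p, q' p = 1)
    (pol : ((j : Fin M) → S j) → ((j : Fin M) → A j) → ℝ)
    (hpolpos : ∀ s a, 0 ≤ pol s a) (hpolsum : ∀ s, ∑ a, pol s a = 1)
    (q : (((j : Fin M) → S j) × ((j : Fin M) → A j)) → ℝ)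
    (hq : ∀ p, q p = ∑ p', q' p' * P p' p.1 * pol p.1 p.2)
    (g : (((k : {k // k ∈ W}) → S k.1) × ((j : {j // j ∈ Z i}) → A j.1)) → ℝ)
    (hg : ∀ x, g x ∈ Set.Icc (0 : ℝ) B) :
    (∑ p, q p * g (fun k => p.1 k.1, fun j => p.2 j.1)) ≤
      (Fintype.card ((j : {j // j ∈ Z i}) → A j.1) : ℝ) *
        (∑ p, q' p * matNorm Sigt⁻¹ (φtil p)) *
          Real.sqrt ((n : ℝ) * (∑ p, ν p * g (fun k => p.1 k.1, fun j => p.2 j.1) ^ 2)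
            + B ^ 2 * lam * (d : ℝ) ^ W.card) := by
  classical
  have hg0 : ∀ x, 0 ≤ g x := fun x => (hg x).1
  have hgB : ∀ x, g x ≤ B := fun x => (hg x).2
  have hPpos : ∀ p s', 0 ≤ P p s' := by
    intro p s'; rw [hP]
    exact Finset.prod_nonneg fun j _ => hPlocpos _ _ _ _
  have hPsum : ∀ p : ((j : Fin M) → S j) × ((j : Fin M) → A j), ∑ s', P p s' = 1 := by
    intro p
    simp only [hP]
    rw [sum_pi_prod]
    simp [hPlocsum]
  set K : ℝ := (Fintype.card ((j : {j // j ∈ Z i}) → A j.1) : ℝ) with hK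
  set C : ℝ := ∑ p, q' p * matNorm Sigt⁻¹ (φtil p) with hC
  set R : ℝ := (n : ℝ) * (∑ p, ν p * g (fun k => p.1 k.1, fun j => p.2 j.1) ^ 2)
      + B ^ 2 * lam * (d : ℝ) ^ W.card with hR
  set θ : ((j : {j // j ∈ Z i}) → A j.1) → ({k // k ∈ W} → Fin d) → ℝ :=
    fun b κ => ∑ z : (k : {k // k ∈ W}) → S k.1,
      (∏ k : {k // k ∈ W}, w k.1 (z k) (κ k)) * g (z, b) with hθ
  have hkey : ∀ (p : ((j : Fin M) → S j) × ((j : Fin M) → A j))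
      (b : (j : {j // j ∈ Z i}) → A j.1),
      (∑ s', P p s' * g (fun k => s' k.1, b)) = φtil p ⬝ᵥ θ b := by
    intro p b
    have hres : ∀ (z : (k : {k // k ∈ W}) → S k.1) (y : (k : {k // ¬ k ∈ W}) → S k.1),
        (fun k : {k // k ∈ W} =>
          ((Equiv.piEquivPiSubtypeProd (fun k => k ∈ W) S).symm (z, y)) k.1) = z := by
      intro z y; funext k
      simp [Equiv.piEquivPiSubtypeProd_symm_apply, k.2]
    have h1 : ∀ (z : (k : {k // k ∈ W}) → S k.1) (y : (k : {k // ¬ k ∈ W}) → S k.1),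
        P p ((Equiv.piEquivPiSubtypeProd (fun k => k ∈ W) S).symm (z, y))
        = (∏ k : {k // k ∈ W}, Ploc k.1 (fun k' => p.1 k'.1) (p.2 k.1) (z k))
          * ∏ k : {k // ¬ k ∈ W}, Ploc k.1 (fun k' => p.1 k'.1) (p.2 k.1) (y k) := by
      intro z y
      rw [hP]
      rw [prod_subtype_split (fun k => k ∈ W)
        (fun j => Ploc j (fun k' => p.1 k'.1) (p.2 j)
          (((Equiv.piEquivPiSubtypeProd (fun k => k ∈ W) S).symm (z, y)) j))]
      congr 1
      · refine Finset.prod_congr rfl fun k _ => ?_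
        exact congrArg _ (by simp [Equiv.piEquivPiSubtypeProd_symm_apply, k.2])
      · refine Finset.prod_congr rfl fun k _ => ?_
        exact congrArg _ (by simp [Equiv.piEquivPiSubtypeProd_symm_apply, k.2])
    rw [sum_pi_split (fun k => k ∈ W) S (fun s' => P p s' * g (fun k => s' k.1, b))]
    have h2 : ∀ (z : (k : {k // k ∈ W}) → S k.1) (y : (k : {k // ¬ k ∈ W}) → S k.1),
        P p ((Equiv.piEquivPiSubtypeProd (fun k => k ∈ W) S).symm (z, y)) *
          g (fun k : {k // k ∈ W} =>
            ((Equiv.piEquivPiSubtypeProd (fun k => k ∈ W) S).symm (z, y)) k.1, b)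
        = ((∏ k : {k // k ∈ W}, Ploc k.1 (fun k' => p.1 k'.1) (p.2 k.1) (z k)) * g (z, b))
          * ∏ k : {k // ¬ k ∈ W}, Ploc k.1 (fun k' => p.1 k'.1) (p.2 k.1) (y k) := by
      intro z y
      rw [h1 z y, hres z y]
      ring
    simp only [h2]
    have h3 : ∀ z : (k : {k // k ∈ W}) → S k.1,
        (∑ y : (k : {k // ¬ k ∈ W}) → S k.1,
          ((∏ k : {k // k ∈ W}, Ploc k.1 (fun k' => p.1 k'.1) (p.2 k.1) (z k)) * g (z, b))
            * ∏ k : {k // ¬ k ∈ W}, Ploc k.1 (fun k' => p.1 k'.1) (p.2 k.1) (y k))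
        = (∏ k : {k // k ∈ W}, Ploc k.1 (fun k' => p.1 k'.1) (p.2 k.1) (z k)) * g (z, b) := by
      intro z
      rw [← Finset.mul_sum]
      have hone : (∑ y : (k : {k // ¬ k ∈ W}) → S k.1,
          ∏ k : {k // ¬ k ∈ W}, Ploc k.1 (fun k' => p.1 k'.1) (p.2 k.1) (y k)) = 1 := by
        rw [sum_pi_prod]
        simp [hPlocsum]
      rw [hone, mul_one]
    simp only [h3]
    have h4 : ∀ z : (k : {k // k ∈ W}) → S k.1,
        (∏ k : {k // k ∈ W}, Ploc k.1 (fun k' => p.1 k'.1) (p.2 k.1) (z k))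
        = ∑ κ : {k // k ∈ W} → Fin d,
            φtil p κ * ∏ k : {k // k ∈ W}, w k.1 (z k) (κ k) := by
      intro z
      simp only [hPloc]
      rw [Finset.prod_univ_sum, Fintype.piFinset_univ]
      refine Finset.sum_congr rfl fun κ _ => ?_
      rw [Finset.prod_mul_distrib, hφtil]
    simp only [h4]
    rw [dotProduct]
    calc (∑ z : (k : {k // k ∈ W}) → S k.1,
          (∑ κ : {k // k ∈ W} → Fin d,
            φtil p κ * ∏ k : {k // k ∈ W}, w k.1 (z k) (κ k)) * g (z, b))
        = ∑ z : (k : {k // k ∈ W}) → S k.1, ∑ κ : {k // k ∈ W} → Fin d,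
            φtil p κ * (∏ k : {k // k ∈ W}, w k.1 (z k) (κ k)) * g (z, b) := by
          refine Finset.sum_congr rfl fun z _ => ?_
          rw [Finset.sum_mul]
      _ = ∑ κ : {k // k ∈ W} → Fin d, ∑ z : (k : {k // k ∈ W}) → S k.1,
            φtil p κ * (∏ k : {k // k ∈ W}, w k.1 (z k) (κ k)) * g (z, b) :=
          Finset.sum_comm
      _ = ∑ κ : {k // k ∈ W} → Fin d, φtil p κ * θ b κ := by
          refine Finset.sum_congr rfl fun κ _ => ?_
          rw [hθ, Finset.mul_sum]
          refine Finset.sum_congr rfl fun z _ => ?_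
          ring
  have stepA : ∀ s : (j : Fin M) → S j,
      (∑ a : (j : Fin M) → A j, pol s a * g (fun k => s k.1, fun j => a j.1))
        ≤ ∑ b : (j : {j // j ∈ Z i}) → A j.1, g (fun k => s k.1, b) := by
    intro s
    rw [sum_pi_split (fun j => j ∈ Z i) A
      (fun a => pol s a * g (fun k => s k.1, fun j => a j.1))]
    have hres : ∀ (b : (j : {j // j ∈ Z i}) → A j.1) (c : (j : {j // ¬ j ∈ Z i}) → A j.1),
        (fun j : {j // j ∈ Z i} =>
          ((Equiv.piEquivPiSubtypeProd (fun j => j ∈ Z i) A).symm (b, c)) j.1) = b := by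
      intro b c; funext j
      simp [Equiv.piEquivPiSubtypeProd_symm_apply, j.2]
    simp only [hres]
    have htot : (∑ b : (j : {j // j ∈ Z i}) → A j.1, ∑ c : (j : {j // ¬ j ∈ Z i}) → A j.1,
        pol s ((Equiv.piEquivPiSubtypeProd (fun j => j ∈ Z i) A).symm (b, c))) = 1 := by
      rw [← sum_pi_split (fun j => j ∈ Z i) A (pol s)]
      exact hpolsum s
    refine Finset.sum_le_sum fun b _ => ?_
    rw [← Finset.sum_mul]
    have hble : (∑ c : (j : {j // ¬ j ∈ Z i}) → A j.1,
        pol s ((Equiv.piEquivPiSubtypeProd (fun j => j ∈ Z i) A).symm (b, c))) ≤ 1 := by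
      rw [← htot]
      exact Finset.single_le_sum
        (f := fun b' : (j : {j // j ∈ Z i}) → A j.1 =>
          ∑ c : (j : {j // ¬ j ∈ Z i}) → A j.1,
            pol s ((Equiv.piEquivPiSubtypeProd (fun j => j ∈ Z i) A).symm (b', c)))
        (fun b' _ => Finset.sum_nonneg fun c _ => hpolpos _ _) (Finset.mem_univ b)
    exact mul_le_of_le_one_left (hg0 _) hble
  have hquad : ∀ v : ({k // k ∈ W} → Fin d) → ℝ,
      v ⬝ᵥ Sigt.mulVec v
        = (n : ℝ) * (∑ p, μ p * (φtil p ⬝ᵥ v) ^ 2) + lam * (∑ κ, v κ ^ 2) := by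
    intro v
    rw [hSigt, Matrix.add_mulVec, dotProduct_add, Matrix.smul_mulVec,
      Matrix.smul_mulVec, dotProduct_smul, dotProduct_smul,
      Matrix.one_mulVec]
    congr 1
    · rw [smul_eq_mul]
      congr 1
      rw [dot_sum_mulVec]
      refine Finset.sum_congr rfl fun p _ => ?_
      rw [Matrix.smul_mulVec, dotProduct_smul, smul_eq_mul, dot_vecMulVec,
        dotProduct_comm v (φtil p), sq]
    · rw [smul_eq_mul]
      congr 1
      simp [dotProduct, sq]
  have hPD : Sigt.PosDef := by
    rw [Matrix.posDef_iff_dotProduct_mulVec]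
    constructor
    · ext κ κ'
      rw [Matrix.conjTranspose_apply, hSigt]
      simp only [Matrix.add_apply, Matrix.smul_apply, Matrix.sum_apply, vecMulVec_apply,
        Matrix.one_apply, smul_eq_mul, star_trivial]
      congr 1
      · congr 1
        exact Finset.sum_congr rfl fun p _ => by ring
      · by_cases h : κ = κ' <;> simp [h, eq_comm]
    · intro x hx
      have hx' : (x : ({k // k ∈ W} → Fin d) → ℝ) ≠ 0 := hx
      have key : (0 : ℝ) < x ⬝ᵥ Sigt.mulVec x := by
        rw [hquad x]
        have h1 : 0 ≤ (n : ℝ) * ∑ p, μ p * (φtil p ⬝ᵥ x) ^ 2 :=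
          mul_nonneg (by positivity)
            (Finset.sum_nonneg fun p _ => mul_nonneg (hμpos p) (sq_nonneg _))
        have h2 : 0 < ∑ κ, x κ ^ 2 := by
          obtain ⟨κ0, hκ0⟩ : ∃ κ, x κ ≠ 0 := by
            by_contra hcon
            push_neg at hcon
            exact hx' (funext fun κ => hcon κ)
          exact Finset.sum_pos' (fun κ _ => sq_nonneg _)
            ⟨κ0, Finset.mem_univ _, by positivity⟩
        nlinarith [mul_pos hlam h2]
      simpa using key
  have hθnorm : ∀ b, (∑ κ, θ b κ ^ 2) ≤ B ^ 2 * (d : ℝ) ^ W.card := by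
    intro b
    have hGmem : ∀ z : (k : {k // k ∈ W}) → S k.1, g (z, b) / B ∈ Set.Icc (0 : ℝ) 1 := by
      intro z
      constructor
      · exact div_nonneg (hg0 _) hB.le
      · rw [div_le_one hB]; exact hgB _
    have h1 := hw (fun z => g (z, b) / B) hGmem
    have h2 : (fun κ : {k // k ∈ W} → Fin d =>
        ∑ z : (k : {k // k ∈ W}) → S k.1,
          (∏ k : {k // k ∈ W}, w k.1 (z k) (κ k)) * (g (z, b) / B))
        = fun κ => θ b κ / B := by
      funext κ
      rw [hθ]
      rw [Finset.sum_div]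
      exact Finset.sum_congr rfl fun z _ => by ring
    rw [h2] at h1
    have hsnn : 0 ≤ ∑ κ, θ b κ ^ 2 := Finset.sum_nonneg fun κ _ => sq_nonneg _
    have h3 : l2norm (fun κ => θ b κ / B) = Real.sqrt (∑ κ, θ b κ ^ 2) / B := by
      rw [l2norm]
      have : (∑ κ, (θ b κ / B) ^ 2) = (∑ κ, θ b κ ^ 2) / B ^ 2 := by
        rw [Finset.sum_div]
        exact Finset.sum_congr rfl fun κ _ => by ring
      rw [this, Real.sqrt_div hsnn, Real.sqrt_sq hB.le]
    rw [h3, div_le_iff₀ hB] at h1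
    have h4 : Real.sqrt (∑ κ, θ b κ ^ 2) ≤ B * Real.sqrt ((d : ℝ) ^ W.card) := by
      linarith [h1]
    calc (∑ κ, θ b κ ^ 2) = Real.sqrt (∑ κ, θ b κ ^ 2) ^ 2 := (Real.sq_sqrt hsnn).symm
      _ ≤ (B * Real.sqrt ((d : ℝ) ^ W.card)) ^ 2 := by
          exact pow_le_pow_left₀ (Real.sqrt_nonneg _) h4 2
      _ = B ^ 2 * (d : ℝ) ^ W.card := by
          rw [mul_pow, Real.sq_sqrt (by positivity)]
  have hstep3 : ∀ b, matNorm Sigt (θ b) ^ 2 ≤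
      (n : ℝ) * (∑ p, μ p * (∑ s', P p s' * g (fun k => s' k.1, b) ^ 2))
        + lam * (B ^ 2 * (d : ℝ) ^ W.card) := by
    intro b
    have hnn : 0 ≤ θ b ⬝ᵥ Sigt.mulVec (θ b) := by
      rw [hquad]
      have h1 : 0 ≤ ∑ p, μ p * (φtil p ⬝ᵥ θ b) ^ 2 :=
        Finset.sum_nonneg fun p _ => mul_nonneg (hμpos p) (sq_nonneg _)
      have h2 : 0 ≤ ∑ κ, θ b κ ^ 2 := Finset.sum_nonneg fun κ _ => sq_nonneg _
      have hn0 : (0 : ℝ) ≤ (n : ℝ) := by positivity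
      nlinarith
    have h0 : matNorm Sigt (θ b) ^ 2 = θ b ⬝ᵥ Sigt.mulVec (θ b) := by
      rw [matNorm]
      exact Real.sq_sqrt hnn
    rw [h0, hquad]
    have hJ : ∀ p, (φtil p ⬝ᵥ θ b) ^ 2 ≤ ∑ s', P p s' * g (fun k => s' k.1, b) ^ 2 := by
      intro p
      rw [← hkey p b]
      exact jensen_sq (P p) (fun s' => g (fun k => s' k.1, b)) (hPpos p) (hPsum p)
    have h1 : (∑ p, μ p * (φtil p ⬝ᵥ θ b) ^ 2)
        ≤ ∑ p, μ p * (∑ s', P p s' * g (fun k => s' k.1, b) ^ 2) :=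
      Finset.sum_le_sum fun p _ => mul_le_mul_of_nonneg_left (hJ p) (hμpos p)
    have h2 := hθnorm b
    have hn0 : (0 : ℝ) ≤ (n : ℝ) := by positivity
    exact add_le_add (mul_le_mul_of_nonneg_left h1 hn0) (mul_le_mul_of_nonneg_left h2 hlam.le)
  have hstep4 : (∑ b : (j : {j // j ∈ Z i}) → A j.1,
      ((n : ℝ) * (∑ p, μ p * (∑ s', P p s' * g (fun k => s' k.1, b) ^ 2))
        + lam * (B ^ 2 * (d : ℝ) ^ W.card))) = K * R := by
    have hres : ∀ (b : (j : {j // j ∈ Z i}) → A j.1) (c : (j : {j // ¬ j ∈ Z i}) → A j.1),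
        (fun j : {j // j ∈ Z i} =>
          ((Equiv.piEquivPiSubtypeProd (fun j => j ∈ Z i) A).symm (b, c)) j.1) = b := by
      intro b c; funext j
      simp [Equiv.piEquivPiSubtypeProd_symm_apply, j.2]
    have hsum1 : ∀ s : (j : Fin M) → S j,
        (∑ a : (j : Fin M) → A j, g (fun k => s k.1, fun j => a j.1) ^ 2)
        = (Fintype.card ((j : {j // ¬ j ∈ Z i}) → A j.1) : ℝ) *
            ∑ b : (j : {j // j ∈ Z i}) → A j.1, g (fun k => s k.1, b) ^ 2 := by
      intro s
      rw [sum_pi_split (fun j => j ∈ Z i) A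
        (fun a => g (fun k => s k.1, fun j => a j.1) ^ 2)]
      simp only [hres]
      rw [Finset.mul_sum]
      refine Finset.sum_congr rfl fun b _ => ?_
      rw [Finset.sum_const, Finset.card_univ, nsmul_eq_mul]
    have hcard : (Fintype.card ((j : Fin M) → A j) : ℝ)
        = K * (Fintype.card ((j : {j // ¬ j ∈ Z i}) → A j.1) : ℝ) := by
      rw [hK, ← Nat.cast_mul]
      congr 1
      rw [Fintype.card_congr (Equiv.piEquivPiSubtypeProd (fun j => j ∈ Z i) A),
        Fintype.card_prod]
    have hA0 : (0 : ℝ) < (Fintype.card ((j : Fin M) → A j) : ℝ) := by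
      exact_mod_cast Fintype.card_pos
    have hC0 : (0 : ℝ) < (Fintype.card ((j : {j // ¬ j ∈ Z i}) → A j.1) : ℝ) := by
      exact_mod_cast Fintype.card_pos
    have hX : ∀ p : ((j : Fin M) → S j) × ((j : Fin M) → A j),
        (∑ b : (j : {j // j ∈ Z i}) → A j.1, ∑ s', P p s' * g (fun k => s' k.1, b) ^ 2)
        = ∑ s', P p s' * ∑ b : (j : {j // j ∈ Z i}) → A j.1, g (fun k => s' k.1, b) ^ 2 := by
      intro p
      rw [Finset.sum_comm]
      exact Finset.sum_congr rfl fun s' _ => (Finset.mul_sum _ _ _).symm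
    have e1 : (∑ b : (j : {j // j ∈ Z i}) → A j.1,
        ((n : ℝ) * (∑ p, μ p * (∑ s', P p s' * g (fun k => s' k.1, b) ^ 2))
          + lam * (B ^ 2 * (d : ℝ) ^ W.card)))
        = (n : ℝ) * (∑ p, μ p * ∑ s', P p s' *
            ∑ b : (j : {j // j ∈ Z i}) → A j.1, g (fun k => s' k.1, b) ^ 2)
          + K * (lam * (B ^ 2 * (d : ℝ) ^ W.card)) := by
      rw [Finset.sum_add_distrib, ← Finset.mul_sum, Finset.sum_const, Finset.card_univ,
        nsmul_eq_mul, ← hK]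
      congr 1
      congr 1
      rw [Finset.sum_comm]
      refine Finset.sum_congr rfl fun p _ => ?_
      rw [← Finset.mul_sum, hX p]
    have e2 : (∑ p, ν p * g (fun k => p.1 k.1, fun j => p.2 j.1) ^ 2) *
          (Fintype.card ((j : Fin M) → A j) : ℝ)
        = (Fintype.card ((j : {j // ¬ j ∈ Z i}) → A j.1) : ℝ) *
            ∑ p', μ p' * ∑ s, P p' s *
              ∑ b : (j : {j // j ∈ Z i}) → A j.1, g (fun k => s k.1, b) ^ 2 := by
      have hstep : ∀ pp : ((j : Fin M) → S j) × ((j : Fin M) → A j),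
          ν pp * g (fun k => pp.1 k.1, fun j => pp.2 j.1) ^ 2 *
            (Fintype.card ((j : Fin M) → A j) : ℝ)
          = ∑ p', μ p' * P p' pp.1 * g (fun k => pp.1 k.1, fun j => pp.2 j.1) ^ 2 := by
        intro pp
        rw [hν pp]
        calc (1 / (Fintype.card ((j : Fin M) → A j) : ℝ) * ∑ p', μ p' * P p' pp.1) *
              g (fun k => pp.1 k.1, fun j => pp.2 j.1) ^ 2 *
              (Fintype.card ((j : Fin M) → A j) : ℝ)
            = (∑ p', μ p' * P p' pp.1) * g (fun k => pp.1 k.1, fun j => pp.2 j.1) ^ 2 *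
                (1 / (Fintype.card ((j : Fin M) → A j) : ℝ) *
                  (Fintype.card ((j : Fin M) → A j) : ℝ)) := by ring
          _ = (∑ p', μ p' * P p' pp.1) * g (fun k => pp.1 k.1, fun j => pp.2 j.1) ^ 2 := by
              rw [one_div_mul_cancel hA0.ne', mul_one]
          _ = ∑ p', μ p' * P p' pp.1 * g (fun k => pp.1 k.1, fun j => pp.2 j.1) ^ 2 :=
              Finset.sum_mul _ _ _
      calc (∑ pp, ν pp * g (fun k => pp.1 k.1, fun j => pp.2 j.1) ^ 2) *
            (Fintype.card ((j : Fin M) → A j) : ℝ)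
          = ∑ pp, ν pp * g (fun k => pp.1 k.1, fun j => pp.2 j.1) ^ 2 *
              (Fintype.card ((j : Fin M) → A j) : ℝ) := Finset.sum_mul _ _ _
        _ = ∑ pp, ∑ p', μ p' * P p' pp.1 *
              g (fun k => pp.1 k.1, fun j => pp.2 j.1) ^ 2 :=
            Finset.sum_congr rfl fun pp _ => hstep pp
        _ = ∑ p', ∑ pp : ((j : Fin M) → S j) × ((j : Fin M) → A j), μ p' * P p' pp.1 *
              g (fun k => pp.1 k.1, fun j => pp.2 j.1) ^ 2 := Finset.sum_comm
        _ = ∑ p', μ p' * ∑ s, P p' s *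
              ((Fintype.card ((j : {j // ¬ j ∈ Z i}) → A j.1) : ℝ) *
                ∑ b : (j : {j // j ∈ Z i}) → A j.1, g (fun k => s k.1, b) ^ 2) := by
            refine Finset.sum_congr rfl fun p' _ => ?_
            rw [Fintype.sum_prod_type, Finset.mul_sum]
            refine Finset.sum_congr rfl fun s _ => ?_
            rw [← hsum1 s, Finset.mul_sum, Finset.mul_sum]
            refine Finset.sum_congr rfl fun a _ => ?_
            ring
        _ = (Fintype.card ((j : {j // ¬ j ∈ Z i}) → A j.1) : ℝ) *
              ∑ p', μ p' * ∑ s, P p' s *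
                ∑ b : (j : {j // j ∈ Z i}) → A j.1, g (fun k => s k.1, b) ^ 2 := by
            rw [Finset.mul_sum]
            refine Finset.sum_congr rfl fun p' _ => ?_
            rw [Finset.mul_sum, Finset.mul_sum, Finset.mul_sum]
            refine Finset.sum_congr rfl fun s _ => ?_
            ring
    have hKT : K * (∑ p, ν p * g (fun k => p.1 k.1, fun j => p.2 j.1) ^ 2)
        = ∑ p', μ p' * ∑ s, P p' s *
            ∑ b : (j : {j // j ∈ Z i}) → A j.1, g (fun k => s k.1, b) ^ 2 := by
      rw [hcard] at e2
      refine mul_right_cancel₀ hC0.ne' ?_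
      calc K * (∑ p, ν p * g (fun k => p.1 k.1, fun j => p.2 j.1) ^ 2) *
            (Fintype.card ((j : {j // ¬ j ∈ Z i}) → A j.1) : ℝ)
          = (∑ p, ν p * g (fun k => p.1 k.1, fun j => p.2 j.1) ^ 2) *
              (K * (Fintype.card ((j : {j // ¬ j ∈ Z i}) → A j.1) : ℝ)) := by ring
        _ = (Fintype.card ((j : {j // ¬ j ∈ Z i}) → A j.1) : ℝ) *
              ∑ p', μ p' * ∑ s, P p' s *
                ∑ b : (j : {j // j ∈ Z i}) → A j.1, g (fun k => s k.1, b) ^ 2 := e2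
        _ = (∑ p', μ p' * ∑ s, P p' s *
              ∑ b : (j : {j // j ∈ Z i}) → A j.1, g (fun k => s k.1, b) ^ 2) *
              (Fintype.card ((j : {j // ¬ j ∈ Z i}) → A j.1) : ℝ) := by ring
    rw [e1, hR, ← hKT]
    ring
  have hνnn : ∀ p, 0 ≤ ν p := by
    intro p; rw [hν]
    exact mul_nonneg (by positivity) (Finset.sum_nonneg fun p' _ =>
      mul_nonneg (hμpos p') (hPpos p' p.1))
  have hRnn : 0 ≤ R := by
    rw [hR]
    have : 0 ≤ ∑ p, ν p * g (fun k => p.1 k.1, fun j => p.2 j.1) ^ 2 :=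
      Finset.sum_nonneg fun p _ => mul_nonneg (hνnn p) (sq_nonneg _)
    positivity
  have hKnn : (0 : ℝ) ≤ K := by rw [hK]; positivity
  have hCnn : 0 ≤ C := by
    rw [hC]
    exact Finset.sum_nonneg fun p _ => mul_nonneg (hq'pos p) (Real.sqrt_nonneg _)
  have hstep5 : (∑ b : (j : {j // j ∈ Z i}) → A j.1, matNorm Sigt (θ b)) ≤ K * Real.sqrt R := by
    have h1 := sum_le_sqrt_card_mul (fun b : (j : {j // j ∈ Z i}) → A j.1 => matNorm Sigt (θ b))
      (fun b => Real.sqrt_nonneg _)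
    have h2 : (∑ b : (j : {j // j ∈ Z i}) → A j.1, matNorm Sigt (θ b) ^ 2) ≤ K * R := by
      calc (∑ b : (j : {j // j ∈ Z i}) → A j.1, matNorm Sigt (θ b) ^ 2)
          ≤ ∑ b : (j : {j // j ∈ Z i}) → A j.1,
            ((n : ℝ) * (∑ p, μ p * (∑ s', P p s' * g (fun k => s' k.1, b) ^ 2))
              + lam * (B ^ 2 * (d : ℝ) ^ W.card)) :=
            Finset.sum_le_sum fun b _ => hstep3 b
        _ = K * R := hstep4
    calc (∑ b : (j : {j // j ∈ Z i}) → A j.1, matNorm Sigt (θ b))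
        ≤ Real.sqrt K * Real.sqrt (∑ b : (j : {j // j ∈ Z i}) → A j.1, matNorm Sigt (θ b) ^ 2) := h1
      _ ≤ Real.sqrt K * Real.sqrt (K * R) := by
          exact mul_le_mul_of_nonneg_left (Real.sqrt_le_sqrt h2) (Real.sqrt_nonneg _)
      _ = K * Real.sqrt R := by
          rw [Real.sqrt_mul hKnn, ← mul_assoc, Real.mul_self_sqrt hKnn]
  have main1 : (∑ p, q p * g (fun k => p.1 k.1, fun j => p.2 j.1))
      = ∑ p', q' p' * ∑ s, P p' s * (∑ a, pol s a * g (fun k => s k.1, fun j => a j.1)) := by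
    calc (∑ p : ((j : Fin M) → S j) × ((j : Fin M) → A j),
          q p * g (fun k => p.1 k.1, fun j => p.2 j.1))
        = ∑ p : ((j : Fin M) → S j) × ((j : Fin M) → A j), ∑ p',
            q' p' * P p' p.1 * pol p.1 p.2 * g (fun k => p.1 k.1, fun j => p.2 j.1) := by
          refine Finset.sum_congr rfl fun p _ => ?_
          rw [hq, Finset.sum_mul]
      _ = ∑ p', ∑ p : ((j : Fin M) → S j) × ((j : Fin M) → A j),
            q' p' * P p' p.1 * pol p.1 p.2 * g (fun k => p.1 k.1, fun j => p.2 j.1) :=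
          Finset.sum_comm
      _ = ∑ p', q' p' * ∑ s, P p' s * (∑ a, pol s a * g (fun k => s k.1, fun j => a j.1)) := by
          refine Finset.sum_congr rfl fun p' _ => ?_
          rw [Fintype.sum_prod_type, Finset.mul_sum]
          refine Finset.sum_congr rfl fun s _ => ?_
          rw [Finset.mul_sum, Finset.mul_sum]
          refine Finset.sum_congr rfl fun a _ => ?_
          ring
  have main2 : (∑ p', q' p' * ∑ s, P p' s * (∑ a, pol s a * g (fun k => s k.1, fun j => a j.1)))
      ≤ ∑ p', q' p' * ∑ b : (j : {j // j ∈ Z i}) → A j.1, (φtil p' ⬝ᵥ θ b) := by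
    refine Finset.sum_le_sum fun p' _ => mul_le_mul_of_nonneg_left ?_ (hq'pos p')
    calc (∑ s, P p' s * (∑ a, pol s a * g (fun k => s k.1, fun j => a j.1)))
        ≤ ∑ s, P p' s * (∑ b : (j : {j // j ∈ Z i}) → A j.1, g (fun k => s k.1, b)) :=
          Finset.sum_le_sum fun s _ => mul_le_mul_of_nonneg_left (stepA s) (hPpos p' s)
      _ = ∑ b : (j : {j // j ∈ Z i}) → A j.1, ∑ s, P p' s * g (fun k => s k.1, b) := by
          rw [Finset.sum_comm]
          exact Finset.sum_congr rfl fun s _ => Finset.mul_sum _ _ _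
      _ = ∑ b : (j : {j // j ∈ Z i}) → A j.1, (φtil p' ⬝ᵥ θ b) :=
          Finset.sum_congr rfl fun b _ => hkey p' b
  have main3 : (∑ p', q' p' * ∑ b : (j : {j // j ∈ Z i}) → A j.1, (φtil p' ⬝ᵥ θ b))
      ≤ C * ∑ b : (j : {j // j ∈ Z i}) → A j.1, matNorm Sigt (θ b) := by
    calc (∑ p', q' p' * ∑ b : (j : {j // j ∈ Z i}) → A j.1, (φtil p' ⬝ᵥ θ b))
        ≤ ∑ p', q' p' * ∑ b : (j : {j // j ∈ Z i}) → A j.1,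
            matNorm Sigt⁻¹ (φtil p') * matNorm Sigt (θ b) := by
          refine Finset.sum_le_sum fun p' _ => mul_le_mul_of_nonneg_left ?_ (hq'pos p')
          exact Finset.sum_le_sum fun b _ => mat_cauchy_schwarz hPD (φtil p') (θ b)
      _ = C * ∑ b : (j : {j // j ∈ Z i}) → A j.1, matNorm Sigt (θ b) := by
          rw [hC, Finset.sum_mul]
          refine Finset.sum_congr rfl fun p' _ => ?_
          rw [← Finset.mul_sum, mul_assoc]
  calc (∑ p, q p * g (fun k => p.1 k.1, fun j => p.2 j.1))
      ≤ ∑ p', q' p' * ∑ b : (j : {j // j ∈ Z i}) → A j.1, (φtil p' ⬝ᵥ θ b) := by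
        rw [main1]; exact main2
    _ ≤ C * ∑ b : (j : {j // j ∈ Z i}) → A j.1, matNorm Sigt (θ b) := main3
    _ ≤ C * (K * Real.sqrt R) := mul_le_mul_of_nonneg_left hstep5 hCnn
    _ = K * C * Real.sqrt R := by ring
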